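/- Let q > p + 1 and let (a₀,...,a_q) and (b₀,...,b_p) be appropriate sequences of nonnegative reals, meaning cᵢ = c_{m−i} for all i and c₀ ≤ c₁ ≤ ... ≤ c_{⌊m/2⌋}. Let u < v be nonnegative integers with u + v ≤ q − p. Then Σ_{i=0}^{p} a_{i+u} b_i ≤ Σ_{i=0}^{p} a_{i+v} b_i. -/

import Mathlib

open Finset

/-- For a symmetric unimodal sequence, values compare according to distance from the ends. -/
lemma aux_cmp (m : ℕ) (c : ℕ → ℝ) (hsym : ∀ i ≤ m, c i = c (m - i))
    (hmono : ∀ i j : ℕ, i ≤ j → j ≤ m / 2 → c i ≤ c j) :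
    ∀ i j : ℕ, i ≤ m → j ≤ m → min i (m - i) ≤ min j (m - j) → c i ≤ c j := by
  have key : ∀ i ≤ m, c i = c (min i (m - i)) := by
    intro i hi
    rcases le_total i (m - i) with h | h
    · rw [min_eq_left h]
    · rw [min_eq_right h]; exact hsym i hi
  intro i j hi hj hij
  rw [key i hi, key j hj]
  exact hmono _ _ hij (by omega)

lemma aux_step (p q : ℕ) (a b : ℕ → ℝ) (hb0 : ∀ i ≤ p, 0 ≤ b i)
    (hasym : ∀ i ≤ q, a i = a (q - i)) (hbsym : ∀ i ≤ p, b i = b (p - i))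
    (hamono : ∀ i j : ℕ, i ≤ j → j ≤ q / 2 → a i ≤ a j)
    (hbmono : ∀ i j : ℕ, i ≤ j → j ≤ p / 2 → b i ≤ b j)
    (u : ℕ) (hu : 2 * u + 1 ≤ q - p) (hpq : p ≤ q) :
    ∑ i ∈ Finset.range (p + 1), a (i + u) * b i
      ≤ ∑ i ∈ Finset.range (p + 1), a (i + u + 1) * b i := by
  set M := q - (2 * u + 1) with hMdef
  have hM : M + 2 * u + 1 = q := by omega
  have hpM : p ≤ M := by omega
  set B : ℕ → ℝ := fun i => if i ≤ p then b i else 0 with hBdef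
  set c : ℕ → ℝ := fun i => a (i + u + 1) - a (i + u) with hcdef
  have hB0 : ∀ i, 0 ≤ B i := by
    intro i
    simp only [hBdef]
    split
    · exact hb0 i ‹_›
    · exact le_refl 0
  have hanti : ∀ i ≤ M, c (M - i) = - c i := by
    intro i hi
    simp only [hcdef]
    have e1 : a (M - i + u + 1) = a (i + u) := by
      rw [hasym (i + u) (by omega)]
      congr 1
      omega
    have e2 : a (M - i + u) = a (i + u + 1) := by
      rw [hasym (i + u + 1) (by omega)]
      congr 1
      omega
    rw [e1, e2]; ring
  have hhalf : ∀ i : ℕ, 2 * i ≤ M → 0 ≤ c i ∧ B (M - i) ≤ B i := by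
    intro i hi
    constructor
    · have := aux_cmp q a hasym hamono (i + u) (i + u + 1) (by omega) (by omega) (by omega)
      simp only [hcdef]
      linarith
    · by_cases hMp : M - i ≤ p
      · have hip : i ≤ p := by omega
        simp only [hBdef, if_pos hMp, if_pos hip]
        exact aux_cmp p b hbsym hbmono (M - i) i hMp hip (by omega)
      · simp only [hBdef, if_neg hMp]
        exact hB0 i
  have hterm : ∀ i ≤ M, 0 ≤ c i * (B i - B (M - i)) := by
    intro i hi
    rcases le_or_gt (2 * i) M with h | h
    · obtain ⟨h1, h2⟩ := hhalf i h
      exact mul_nonneg h1 (by linarith)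
    · have hj : 2 * (M - i) ≤ M := by omega
      obtain ⟨h1, h2⟩ := hhalf (M - i) hj
      rw [show M - (M - i) = i by omega] at h2
      have hc := hanti i hi
      nlinarith [mul_nonneg h1 (sub_nonneg.2 h2)]
  have hdiff : ∑ i ∈ Finset.range (M + 1), c i * B i
      = (∑ i ∈ Finset.range (p + 1), a (i + u + 1) * b i)
        - ∑ i ∈ Finset.range (p + 1), a (i + u) * b i := by
    have h1 : ∑ i ∈ Finset.range (M + 1), c i * B i
        = ∑ i ∈ Finset.range (p + 1), c i * B i := by
      refine (Finset.sum_subset (Finset.range_subset_range.2 (by omega)) ?_).symm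
      intro x hx hxn
      have hxp : ¬ x ≤ p := by
        simp only [mem_range] at hxn
        omega
      simp [hBdef, hxp]
    rw [h1, ← Finset.sum_sub_distrib]
    apply Finset.sum_congr rfl
    intro i hi
    have hip : i ≤ p := by
      simp only [mem_range] at hi
      omega
    simp only [hcdef, hBdef, if_pos hip]
    ring
  have hrefl : ∑ i ∈ Finset.range (M + 1), c i * B i
      = ∑ i ∈ Finset.range (M + 1), c (M - i) * B (M - i) := by
    have := Finset.sum_range_reflect (fun i => c i * B i) (M + 1)
    simp only [Nat.add_sub_cancel] at this
    exact this.symm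
  have h2T : (2 : ℝ) * (∑ i ∈ Finset.range (M + 1), c i * B i)
      = ∑ i ∈ Finset.range (M + 1), c i * (B i - B (M - i)) := by
    rw [two_mul]
    nth_rewrite 2 [hrefl]
    rw [← Finset.sum_add_distrib]
    apply Finset.sum_congr rfl
    intro i hi
    rw [hanti i (by simp only [mem_range] at hi; omega)]
    ring
  have hpos : (0 : ℝ) ≤ ∑ i ∈ Finset.range (M + 1), c i * (B i - B (M - i)) :=
    Finset.sum_nonneg fun i hi => hterm i (by simp only [mem_range] at hi; omega)
  have : (0 : ℝ) ≤ ∑ i ∈ Finset.range (M + 1), c i * B i := by linarith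
  linarith [hdiff ▸ this]

lemma aux_sym (p q t : ℕ) (a b : ℕ → ℝ)
    (hasym : ∀ i ≤ q, a i = a (q - i)) (hbsym : ∀ i ≤ p, b i = b (p - i))
    (ht : t ≤ q - p) (hpq : p ≤ q) :
    ∑ i ∈ Finset.range (p + 1), a (i + (q - p - t)) * b i
      = ∑ i ∈ Finset.range (p + 1), a (i + t) * b i := by
  rw [← Finset.sum_range_reflect (fun j => a (j + (q - p - t)) * b j) (p + 1)]
  apply Finset.sum_congr rfl
  intro j hj
  have hjp : j ≤ p := by simp only [mem_range] at hj; omega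
  simp only [Nat.add_sub_cancel]
  have e1 : p - j + (q - p - t) = q - (j + t) := by omega
  rw [e1, ← hasym (j + t) (by omega), ← hbsym j hjp]

/-- Lemma 3.4: an inequality for "appropriate" (symmetric, unimodal) sequences. -/
theorem stmt12 (p q : ℕ) (hq : p + 1 < q)
    (a b : ℕ → ℝ)
    (ha0 : ∀ i ≤ q, 0 ≤ a i) (hb0 : ∀ i ≤ p, 0 ≤ b i)
    (hasym : ∀ i ≤ q, a i = a (q - i)) (hbsym : ∀ i ≤ p, b i = b (p - i))
    (hamono : ∀ i j : ℕ, i ≤ j → j ≤ q / 2 → a i ≤ a j)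
    (hbmono : ∀ i j : ℕ, i ≤ j → j ≤ p / 2 → b i ≤ b j)
    (u v : ℕ) (huv : u < v) (hsum : u + v ≤ q - p) :
    ∑ i ∈ Finset.range (p + 1), a (i + u) * b i
      ≤ ∑ i ∈ Finset.range (p + 1), a (i + v) * b i := by
  have hpq : p ≤ q := by omega
  have chain : ∀ d t : ℕ, 2 * t + 2 * d ≤ q - p →
      (∑ i ∈ Finset.range (p + 1), a (i + t) * b i)
        ≤ ∑ i ∈ Finset.range (p + 1), a (i + (t + d)) * b i := by
    intro d
    induction d with
    | zero => intro t _; simp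
    | succ d ih =>
      intro t ht
      have h1 : (∑ i ∈ Finset.range (p + 1), a (i + t) * b i)
          ≤ ∑ i ∈ Finset.range (p + 1), a (i + t + 1) * b i :=
        aux_step p q a b hb0 hasym hbsym hamono hbmono t (by omega) hpq
      have h2 := ih (t + 1) (by omega)
      calc (∑ i ∈ Finset.range (p + 1), a (i + t) * b i)
          ≤ ∑ i ∈ Finset.range (p + 1), a (i + t + 1) * b i := h1
        _ = ∑ i ∈ Finset.range (p + 1), a (i + (t + 1)) * b i := by
            apply Finset.sum_congr rfl
            intro i _
            rw [show i + t + 1 = i + (t + 1) by omega]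
        _ ≤ ∑ i ∈ Finset.range (p + 1), a (i + (t + 1 + d)) * b i := h2
        _ = ∑ i ∈ Finset.range (p + 1), a (i + (t + (d + 1))) * b i := by
            rw [show t + 1 + d = t + (d + 1) by omega]
  rcases le_or_gt (2 * v) (q - p) with h | h
  · have := chain (v - u) u (by omega)
    rwa [show u + (v - u) = v by omega] at this
  · have hvqp : v ≤ q - p := by omega
    have h1 := chain (q - p - v - u) u (by omega)
    rw [show u + (q - p - v - u) = q - p - v by omega] at h1
    have h2 := aux_sym p q v a b hasym hbsym hvqp hpq
    linarith
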